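/- Let n ≥ 3 be an integer and set σ = 40n³. Let u, v, w be three pairwise distinct points of ℝ² all of whose coordinates are integers in {0, 1, …, n−1}, and assume w does not lie on the segment [u, v]. Then every point x ∈ ℝ² with ‖x − σ·w‖_∞ ≤ 10n² + 2 is at Euclidean distance strictly greater than 2 from the segment [σ·u, σ·v]; that is, the box of radius 10n² + 2 centered on σ·w does not intersect the margin at distance 2 of the scaled segment [σ·u, σ·v]. -/

import Mathlib

lemma int_one_le_sq {z : ℤ} (hz : z ≠ 0) : (1:ℤ) ≤ z^2 := by
  nlinarith [Int.one_le_abs hz, sq_abs z]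

lemma int_pair_sq {z0 z1 : ℤ} (h : ¬(z0 = 0 ∧ z1 = 0)) :
    (1:ℝ) ≤ (z0:ℝ)^2 + (z1:ℝ)^2 := by
  have : (1:ℤ) ≤ z0^2 + z1^2 := by
    rcases not_and_or.mp h with h | h
    · nlinarith [int_one_le_sq h, sq_nonneg z1]
    · nlinarith [int_one_le_sq h, sq_nonneg z0]
  exact_mod_cast this

lemma eucl_ne_coords {p q : EuclideanSpace ℝ (Fin 2)} (h : p ≠ q) :
    ¬(p 0 = q 0 ∧ p 1 = q 1) := by
  rintro ⟨h0, h1⟩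
  apply h
  ext i
  fin_cases i <;> assumption

lemma numA (m f : ℝ) (hm : 3 ≤ m) (hf : 1 ≤ f * (2*m^2)) :
    (28*m^2)^2 ≤ (40*m^3)^2 * f := by
  have h1 : (0:ℝ) ≤ 800*m^4 := by positivity
  have h2 : 800*m^4 * 1 ≤ 800*m^4 * (f * (2*m^2)) := mul_le_mul_of_nonneg_left hf h1
  nlinarith [h1, h2]

lemma numB (m d0 d1 : ℝ) (hm : 3 ≤ m) (h0 : d0^2 ≤ (10*m^2+2)^2)
    (h1 : d1^2 ≤ (10*m^2+2)^2) : d0^2 + d1^2 ≤ (15*m^2)^2 := by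
  have h9 : (9:ℝ) ≤ m^2 := by nlinarith
  have h4 : 9*m^2 ≤ m^2*m^2 := by nlinarith
  nlinarith [h9, h4]

lemma key (a0 a1 b0 b1 t N : ℝ) (ht0 : 0 ≤ t) (ht1 : t ≤ 1)
    (hb : 1 ≤ b0^2 + b1^2) (hbN : b0^2 + b1^2 ≤ N)
    (ha : 1 ≤ a0^2 + a1^2) (hav : 1 ≤ (a0 - b0)^2 + (a1 - b1)^2)
    (hcross : 1 ≤ (a0*b1 - a1*b0)^2 ∨ a0*b1 - a1*b0 = 0)
    (hs : ∀ s : ℝ, a0 = s*b0 → a1 = s*b1 → s < 0 ∨ 1 < s) :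
    1/N ≤ (a0 - t*b0)^2 + (a1 - t*b1)^2 := by
  have hN : (1:ℝ) ≤ N := le_trans hb hbN
  have hN0 : (0:ℝ) < N := by linarith
  have hB0 : (0:ℝ) < b0^2 + b1^2 := by linarith
  have hNinv : 1/N ≤ 1 := by
    rw [div_le_one hN0]; linarith
  rcases hcross with hc | hc
  · rw [div_le_iff₀ hN0]
    have hlag : (a0*b1 - a1*b0)^2 ≤ ((a0 - t*b0)^2 + (a1 - t*b1)^2) * (b0^2 + b1^2) := by
      nlinarith [sq_nonneg ((a0 - t*b0)*b0 + (a1 - t*b1)*b1)]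
    have hf0 : 0 ≤ (a0 - t*b0)^2 + (a1 - t*b1)^2 := by positivity
    nlinarith
  · have hb' : b0 ≠ 0 ∨ b1 ≠ 0 := by
      by_contra h; push_neg at h; rw [h.1, h.2] at hb; norm_num at hb
    obtain ⟨s, hs0, hs1⟩ : ∃ s : ℝ, a0 = s*b0 ∧ a1 = s*b1 := by
      rcases hb' with h | h
      · exact ⟨a0/b0, by field_simp, by field_simp; nlinarith [hc]⟩
      · exact ⟨a1/b1, by field_simp; nlinarith [hc], by field_simp⟩
    have e0 : a0 - t*b0 = (s - t)*b0 := by rw [hs0]; ring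
    have e1 : a1 - t*b1 = (s - t)*b1 := by rw [hs1]; ring
    rw [e0, e1]
    rcases hs s hs0 hs1 with h | h
    · have : s^2 * (b0^2 + b1^2) = a0^2 + a1^2 := by rw [hs0, hs1]; ring
      nlinarith [sq_nonneg (s - t), mul_nonneg ht0 (by linarith : (0:ℝ) ≤ t - 2*s)]
    · have : (s-1)^2 * (b0^2 + b1^2) = (a0-b0)^2 + (a1-b1)^2 := by rw [hs0, hs1]; ring
      nlinarith [mul_nonneg (by linarith : (0:ℝ) ≤ 1 - t) (by linarith : (0:ℝ) ≤ 2*s - 1 - t)]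

set_option maxHeartbeats 1600000

/-- Claim (iii) of Section 5 of the paper: the box of radius `10n² + 2`
(for the sup norm) centered on `σ·w` (with `σ = 40n³`) does not intersect the
margin at distance 2 of the scaled segment `[σ·u, σ·v]`, provided `w` is not
on the segment `[u, v]`. -/
theorem stmt8 (n : ℕ) (hn : 3 ≤ n) (u v w : EuclideanSpace ℝ (Fin 2))
    (hu : ∀ i, ∃ k : ℕ, k < n ∧ u i = k)
    (hv : ∀ i, ∃ k : ℕ, k < n ∧ v i = k)
    (hw : ∀ i, ∃ k : ℕ, k < n ∧ w i = k)
    (huv : u ≠ v) (huw : u ≠ w) (hvw : v ≠ w)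
    (hseg : w ∉ segment ℝ u v)
    (x : EuclideanSpace ℝ (Fin 2))
    (hx : max |x 0 - ((40 * (n : ℝ) ^ 3) • w) 0| |x 1 - ((40 * (n : ℝ) ^ 3) • w) 1|
      ≤ 10 * (n : ℝ) ^ 2 + 2) :
    2 < Metric.infDist x
      (segment ℝ ((40 * (n : ℝ) ^ 3) • u) ((40 * (n : ℝ) ^ 3) • v)) := by
  have hn3 : (3:ℝ) ≤ (n:ℝ) := by exact_mod_cast hn
  obtain ⟨ku0, hku0n, hu0⟩ := hu 0
  obtain ⟨ku1, hku1n, hu1⟩ := hu 1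
  obtain ⟨kv0, hkv0n, hv0⟩ := hv 0
  obtain ⟨kv1, hkv1n, hv1⟩ := hv 1
  obtain ⟨kw0, hkw0n, hw0⟩ := hw 0
  obtain ⟨kw1, hkw1n, hw1⟩ := hw 1
  set a0 : ℝ := w 0 - u 0 with ha0def
  set a1 : ℝ := w 1 - u 1 with ha1def
  set b0 : ℝ := v 0 - u 0 with hb0def
  set b1 : ℝ := v 1 - u 1 with hb1def
  clear_value a0 a1 b0 b1
  -- integer representations
  have ha0 : a0 = ((kw0 : ℤ) - (ku0 : ℤ) : ℤ) := by rw [ha0def, hw0, hu0]; push_cast; ring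
  have ha1 : a1 = ((kw1 : ℤ) - (ku1 : ℤ) : ℤ) := by rw [ha1def, hw1, hu1]; push_cast; ring
  have hb0 : b0 = ((kv0 : ℤ) - (ku0 : ℤ) : ℤ) := by rw [hb0def, hv0, hu0]; push_cast; ring
  have hb1 : b1 = ((kv1 : ℤ) - (ku1 : ℤ) : ℤ) := by rw [hb1def, hv1, hu1]; push_cast; ring
  -- coordinate bounds
  have hcb : ∀ k : ℕ, k < n → (0:ℝ) ≤ (k:ℝ) ∧ (k:ℝ) ≤ (n:ℝ) - 1 := by
    intro k hk
    constructor
    · positivity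
    · have : (k:ℝ) + 1 ≤ n := by exact_mod_cast hk
      linarith
  obtain ⟨hu0l, hu0r⟩ := hcb _ hku0n
  obtain ⟨hu1l, hu1r⟩ := hcb _ hku1n
  obtain ⟨hv0l, hv0r⟩ := hcb _ hkv0n
  obtain ⟨hv1l, hv1r⟩ := hcb _ hkv1n
  -- norm lower bounds from distinctness
  have hanz : 1 ≤ a0^2 + a1^2 := by
    rw [ha0, ha1]
    apply int_pair_sq
    rintro ⟨h0, h1⟩
    apply eucl_ne_coords huw
    constructor
    · have : a0 = 0 := by rw [ha0, h0]; norm_num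
      rw [ha0def] at this; linarith
    · have : a1 = 0 := by rw [ha1, h1]; norm_num
      rw [ha1def] at this; linarith
  have hbnz : 1 ≤ b0^2 + b1^2 := by
    rw [hb0, hb1]
    apply int_pair_sq
    rintro ⟨h0, h1⟩
    apply eucl_ne_coords huv
    constructor
    · have : b0 = 0 := by rw [hb0, h0]; norm_num
      rw [hb0def] at this; linarith
    · have : b1 = 0 := by rw [hb1, h1]; norm_num
      rw [hb1def] at this; linarith
  have hvwnz : 1 ≤ (a0 - b0)^2 + (a1 - b1)^2 := by
    have e0 : a0 - b0 = ((kw0 : ℤ) - (kv0 : ℤ) : ℤ) := by rw [ha0, hb0]; push_cast; ring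
    have e1 : a1 - b1 = ((kw1 : ℤ) - (kv1 : ℤ) : ℤ) := by rw [ha1, hb1]; push_cast; ring
    rw [e0, e1]
    apply int_pair_sq
    rintro ⟨h0, h1⟩
    apply eucl_ne_coords hvw
    constructor
    · have : a0 - b0 = 0 := by rw [e0, h0]; norm_num
      rw [ha0def, hb0def] at this; linarith
    · have : a1 - b1 = 0 := by rw [e1, h1]; norm_num
      rw [ha1def, hb1def] at this; linarith
  -- cross product
  have hcross : 1 ≤ (a0*b1 - a1*b0)^2 ∨ a0*b1 - a1*b0 = 0 := by
    set zc : ℤ := ((kw0 : ℤ) - ku0) * ((kv1 : ℤ) - ku1) - ((kw1 : ℤ) - ku1) * ((kv0 : ℤ) - ku0)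
      with hzc
    have hc : a0*b1 - a1*b0 = (zc:ℝ) := by rw [ha0, ha1, hb0, hb1, hzc]; push_cast; ring
    rcases eq_or_ne zc 0 with h | h
    · right; rw [hc, h]; norm_num
    · left; rw [hc]
      have := int_one_le_sq h
      exact_mod_cast this
  -- segment condition
  have hs : ∀ s : ℝ, a0 = s*b0 → a1 = s*b1 → s < 0 ∨ 1 < s := by
    intro s h0 h1
    by_contra hcon
    push_neg at hcon
    apply hseg
    refine ⟨1 - s, s, by linarith [hcon.1], hcon.1, by ring, ?_⟩
    ext i
    fin_cases i
    · simp only [Fin.zero_eta, Fin.mk_one, PiLp.add_apply, PiLp.smul_apply, smul_eq_mul]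
      rw [ha0def] at h0; rw [hb0def] at h0; linarith [h0]
    · simp only [Fin.zero_eta, Fin.mk_one, PiLp.add_apply, PiLp.smul_apply, smul_eq_mul]
      rw [ha1def] at h1; rw [hb1def] at h1; linarith [h1]
  -- b bound
  have hbN : b0^2 + b1^2 ≤ 2*(n:ℝ)^2 := by
    have hb0sq : b0^2 ≤ ((n:ℝ) - 1)^2 :=
      sq_le_sq' (by rw [hb0def]; linarith) (by rw [hb0def]; linarith)
    have hb1sq : b1^2 ≤ ((n:ℝ) - 1)^2 :=
      sq_le_sq' (by rw [hb1def]; linarith) (by rw [hb1def]; linarith)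
    have hexp : ((n:ℝ) - 1)^2 = (n:ℝ)^2 - 2*(n:ℝ) + 1 := by ring
    linarith [hb0sq, hb1sq, hn3, hexp]
  set σ : ℝ := 40 * (n:ℝ)^3 with hσ
  clear_value σ
  -- bound for every point of the scaled segment
  have hge : ∀ y ∈ segment ℝ (σ • u) (σ • v), 3 ≤ dist x y := by
    intro y hy
    obtain ⟨α, β, hα, hβ, hαβ, hyeq⟩ := hy
    have hα' : α = 1 - β := by linarith
    subst hα'
    have hβ1 : β ≤ 1 := by linarith
    have hf := key a0 a1 b0 b1 β (2*(n:ℝ)^2) hβ hβ1 hbnz hbN hanz hvwnz hcross hs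
    have hn2 : (0:ℝ) < 2*(n:ℝ)^2 := by positivity
    have hf' : 1 ≤ ((a0 - β*b0)^2 + (a1 - β*b1)^2) * (2*(n:ℝ)^2) := by
      rw [div_le_iff₀ hn2] at hf; linarith
    -- coordinates of y
    have hsw0 : (σ • w : EuclideanSpace ℝ (Fin 2)) 0 = σ * w 0 := by
      simp [PiLp.smul_apply]
    have hsw1 : (σ • w : EuclideanSpace ℝ (Fin 2)) 1 = σ * w 1 := by
      simp [PiLp.smul_apply]
    have e0 : (σ • w : EuclideanSpace ℝ (Fin 2)) 0 - y 0 = σ * (a0 - β*b0) := by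
      rw [← hyeq, hsw0]
      simp only [PiLp.add_apply, PiLp.smul_apply, smul_eq_mul]
      rw [ha0def, hb0def]; ring
    have e1 : (σ • w : EuclideanSpace ℝ (Fin 2)) 1 - y 1 = σ * (a1 - β*b1) := by
      rw [← hyeq, hsw1]
      simp only [PiLp.add_apply, PiLp.smul_apply, smul_eq_mul]
      rw [ha1def, hb1def]; ring
    -- lower bound on dist (σ•w) y
    have hd1 : 28*(n:ℝ)^2 ≤ dist (σ • w) y := by
      rw [EuclideanSpace.dist_eq, Fin.sum_univ_two]
      rw [Real.le_sqrt (by positivity) (by positivity)]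
      have d0 : dist ((σ • w) 0) (y 0) ^ 2 = (σ * (a0 - β*b0))^2 := by
        rw [Real.dist_eq, sq_abs, e0]
      have d1 : dist ((σ • w) 1) (y 1) ^ 2 = (σ * (a1 - β*b1))^2 := by
        rw [Real.dist_eq, sq_abs, e1]
      rw [d0, d1]
      have : (σ * (a0 - β*b0))^2 + (σ * (a1 - β*b1))^2
          = σ^2 * ((a0 - β*b0)^2 + (a1 - β*b1)^2) := by ring
      rw [this, hσ]
      exact numA (n:ℝ) _ hn3 hf'
    -- upper bound on dist (σ•w) x
    have hd2 : dist (σ • w) x ≤ 15*(n:ℝ)^2 := by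
      have hx0 : |x 0 - (σ • w : EuclideanSpace ℝ (Fin 2)) 0| ≤ 10*(n:ℝ)^2 + 2 :=
        le_of_max_le_left hx
      have hx1 : |x 1 - (σ • w : EuclideanSpace ℝ (Fin 2)) 1| ≤ 10*(n:ℝ)^2 + 2 :=
        le_of_max_le_right hx
      obtain ⟨hx0a, hx0b⟩ := abs_le.mp hx0
      obtain ⟨hx1a, hx1b⟩ := abs_le.mp hx1
      rw [EuclideanSpace.dist_eq, Fin.sum_univ_two]
      have : dist ((σ • w) 0) (x 0) ^ 2 + dist ((σ • w) 1) (x 1) ^ 2 ≤ (15*(n:ℝ)^2)^2 := by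
        rw [Real.dist_eq, Real.dist_eq, sq_abs, sq_abs]
        have hh0 : ((σ • w : EuclideanSpace ℝ (Fin 2)) 0 - x 0)^2 ≤ (10*(n:ℝ)^2+2)^2 :=
          sq_le_sq' (by linarith) (by linarith)
        have hh1 : ((σ • w : EuclideanSpace ℝ (Fin 2)) 1 - x 1)^2 ≤ (10*(n:ℝ)^2+2)^2 :=
          sq_le_sq' (by linarith) (by linarith)
        exact numB (n:ℝ) _ _ hn3 hh0 hh1
      calc √(dist ((σ • w) 0) (x 0) ^ 2 + dist ((σ • w) 1) (x 1) ^ 2)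
          ≤ √((15*(n:ℝ)^2)^2) := Real.sqrt_le_sqrt this
        _ = 15*(n:ℝ)^2 := Real.sqrt_sq (by positivity)
    have htri := dist_triangle (σ • w) x y
    have h9 : (9:ℝ) ≤ (n:ℝ)^2 := by
      have h33 : (3:ℝ)*3 ≤ (n:ℝ)*(n:ℝ) := mul_le_mul hn3 hn3 (by norm_num) (by linarith)
      have : (n:ℝ)*(n:ℝ) = (n:ℝ)^2 := by ring
      linarith [h33, this]
    have hdx : dist x y ≥ 3 := by
      linarith [hd1, hd2, htri, h9]
    linarith
  have hne : (segment ℝ (σ • u) (σ • v)).Nonempty := ⟨_, left_mem_segment ℝ _ _⟩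
  have h3 : ¬ Metric.infDist x (segment ℝ (σ • u) (σ • v)) < 3 := by
    rw [Metric.infDist_lt_iff hne]
    push_neg
    intro y hy
    exact hge y hy
  linarith [not_lt.1 h3]
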